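/- Gordan–Dickson / Hilbert basis existence: the set S of nonnegative integer solutions a ∈ ℕ^m of a homogeneous linear Diophantine system M a = 0 (M an integer matrix) is a submonoid of ℕ^m under addition, and it admits a finite generating set H such that every element of S is a finite sum (equivalently an ℕ-linear combination) of elements of H. -/

import Mathlib

section aux

variable {m : ℕ}

/-- The set of minimal nonzero elements of a set `S ⊆ ℕ^m`. -/
def minSet (S : Set (Fin m → ℕ)) : Set (Fin m → ℕ) :=
  {a | a ∈ S ∧ a ≠ 0 ∧ ∀ b ∈ S, b ≠ 0 → b ≤ a → b = a}

lemma pi_nat_isPWO {m : ℕ} (s : Set (Fin m → ℕ)) : s.IsPWO :=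
  Set.isPWO_of_wellQuasiOrderedLE s

lemma minSet_finite (S : Set (Fin m → ℕ)) : (minSet S).Finite := by
  by_contra hinf
  have hinf' : (minSet S).Infinite := hinf
  set f := hinf'.natEmbedding with hfdef
  obtain ⟨i, j, hij, hle⟩ := (pi_nat_isPWO (minSet S)).exists_lt (f := fun n => (f n : Fin m → ℕ))
    (fun n => (f n).2)
  have h := (f j).2.2.2 (f i) (f i).2.1 (f i).2.2.1 hle
  exact absurd (f.injective (Subtype.ext h)) hij.ne

end aux

/-- Gordan–Dickson / Hilbert basis existence: the nonnegative
integer solutions of a homogeneous linear Diophantine system form an additive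
submonoid of `ℕ^m` possessing a finite generating set. -/
theorem stmt_4 (k m : ℕ) (M : Matrix (Fin k) (Fin m) ℤ)
    (S : Set (Fin m → ℕ)) (hS : S = {a | ∀ i, ∑ j, M i j * (a j : ℤ) = 0}) :
    (0 ∈ S) ∧ (∀ a ∈ S, ∀ b ∈ S, a + b ∈ S) ∧
      ∃ H : Finset (Fin m → ℕ), ↑H ⊆ S ∧
        ∀ s ∈ S, ∃ c : (Fin m → ℕ) → ℕ, s = ∑ h ∈ H, c h • h := by
  subst hS
  refine ⟨by simp, fun a ha b hb i => ?_, ?_⟩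
  · simp only [Set.mem_setOf_eq] at ha hb
    simp [Pi.add_apply, Nat.cast_add, mul_add, Finset.sum_add_distrib, ha i, hb i]
  · set S : Set (Fin m → ℕ) := {a | ∀ i, ∑ j, M i j * (a j : ℤ) = 0} with hSdef
    -- S is closed under subtraction when the difference stays in ℕ^m
    have hsub : ∀ a ∈ S, ∀ b ∈ S, b ≤ a → a - b ∈ S := by
      intro a ha b hb hba i
      have hab : ∀ j, ((a - b) j : ℤ) = (a j : ℤ) - (b j : ℤ) := by
        intro j
        simp [Pi.sub_apply, Nat.cast_sub (hba j)]
      calc ∑ j, M i j * ((a - b) j : ℤ)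
          = ∑ j, (M i j * (a j : ℤ) - M i j * (b j : ℤ)) := by
            refine Finset.sum_congr rfl fun j _ => ?_
            rw [hab j, mul_sub]
        _ = 0 := by rw [Finset.sum_sub_distrib, ha i, hb i, sub_zero]
    refine ⟨(minSet_finite S).toFinset, ?_, ?_⟩
    · intro h hh
      simp only [Set.Finite.coe_toFinset] at hh
      exact hh.1
    · suffices hkey : ∀ N (s : Fin m → ℕ), s ∈ S → (∑ j, s j) = N →
          ∃ c : (Fin m → ℕ) → ℕ, s = ∑ h ∈ (minSet_finite S).toFinset, c h • h by
        exact fun s hs => hkey _ s hs rfl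
      intro N
      induction N using Nat.strong_induction_on with
      | _ N ih =>
      intro s hs hN
      rcases eq_or_ne s 0 with rfl | hs0
      · exact ⟨0, by simp⟩
      · -- find a minimal nonzero element below s
        have hT : {a | a ∈ S ∧ a ≠ 0 ∧ a ≤ s}.IsWF := (pi_nat_isPWO _).isWF
        have hTne : {a | a ∈ S ∧ a ≠ 0 ∧ a ≤ s}.Nonempty := ⟨s, hs, hs0, le_refl _⟩
        set h := hT.min hTne with hhdef
        have hhmem := hT.min_mem hTne
        have hhmin : h ∈ minSet S := by
          refine ⟨hhmem.1, hhmem.2.1, fun b hb hb0 hbh => ?_⟩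
          have hbT : b ∈ {a | a ∈ S ∧ a ≠ 0 ∧ a ≤ s} :=
            ⟨hb, hb0, le_trans hbh hhmem.2.2⟩
          have hnl := hT.not_lt_min hTne hbT
          by_contra hne
          exact hnl (hbh.lt_of_ne hne)
        have hhle : h ≤ s := hhmem.2.2
        have hh0 : h ≠ 0 := hhmem.2.1
        have hsh : s - h ∈ S := hsub s hs h hhmem.1 hhle
        have hlt : (∑ j, (s - h) j) < N := by
          subst hN
          have h1 : ∀ j, (s - h) j ≤ s j := fun j => Nat.sub_le _ _
          obtain ⟨j0, hj0⟩ : ∃ j, h j ≠ 0 := by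
            by_contra hc
            push_neg at hc
            exact hh0 (funext fun j => hc j)
          refine Finset.sum_lt_sum (fun j _ => h1 j) ⟨j0, Finset.mem_univ _, ?_⟩
          have h2 : (s - h) j0 = s j0 - h j0 := rfl
          have h3 : h j0 ≤ s j0 := hhle j0
          omega
        obtain ⟨c', hc'⟩ := ih _ hlt (s - h) hsh rfl
        classical
        refine ⟨fun x => c' x + (if x = h then 1 else 0), ?_⟩
        have hhH : h ∈ (minSet_finite S).toFinset := by
          rw [Set.Finite.mem_toFinset]; exact hhmin
        have hsplit : ∑ x ∈ (minSet_finite S).toFinset,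
            (c' x + (if x = h then 1 else 0)) • x
            = (∑ x ∈ (minSet_finite S).toFinset, c' x • x) + h := by
          simp only [add_smul, ite_smul, one_smul, zero_smul]
          rw [Finset.sum_add_distrib]
          congr 1
          rw [Finset.sum_ite_eq' _ h (fun x => x), if_pos hhH]
        rw [hsplit, ← hc']
        funext j
        have h2 : ((s - h) + h) j = (s j - h j) + h j := rfl
        have h3 : h j ≤ s j := hhle j
        rw [h2]
        omega
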